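/- Let F be a field of characteristic 0 and let n ∈ ℕ. Two involutions g₁, g₂ ∈ Sp_{2n}(F) (i.e. g₁² = g₂² = 1) are conjugate by an element of Sp_{2n}(F) if and only if trace(g₁) = trace(g₂). -/

import Mathlib

open Matrix

section GS
variable {F V : Type*} [Field F] [CharZero F] [AddCommGroup V] [Module F V]
  [FiniteDimensional F V]
variable (B : V →ₗ[F] V →ₗ[F] F)

private lemma eq_zero_of_self_eq_neg {a : F} (h : a = -a) : a = 0 := by
  have h2 : (2 : F) * a = 0 := by linear_combination h
  rcases mul_eq_zero.mp h2 with h' | h'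
  · norm_num at h'
  · exact h'

theorem exists_symp (hskew : ∀ x y, B x y = - B y x) :
    ∀ (k : ℕ) (W : Submodule F V), Module.finrank F W ≤ k →
    (∀ w ∈ W, (∀ x ∈ W, B w x = 0) → w = 0) →
    ∃ (m : ℕ) (e f : Fin m → V), (∀ i, e i ∈ W) ∧ (∀ i, f i ∈ W) ∧
      (∀ i j, B (e i) (e j) = 0) ∧ (∀ i j, B (f i) (f j) = 0) ∧
      (∀ i j, B (e i) (f j) = if i = j then 1 else 0) ∧
      (∀ w ∈ W, w ∈ Submodule.span F (Set.range e ∪ Set.range f)) := by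
  intro k
  induction k with
  | zero =>
    intro W hrank _
    have hW : W = ⊥ := Submodule.finrank_eq_zero.mp (Nat.le_zero.mp hrank)
    refine ⟨0, Fin.elim0, Fin.elim0, fun i => i.elim0, fun i => i.elim0,
      fun i => i.elim0, fun i => i.elim0, fun i => i.elim0, ?_⟩
    intro w hw
    rw [hW, Submodule.mem_bot] at hw
    simp [hw]
  | succ k ih =>
    intro W hrank hnd
    by_cases hbot : W = ⊥
    · refine ⟨0, Fin.elim0, Fin.elim0, fun i => i.elim0, fun i => i.elim0,
        fun i => i.elim0, fun i => i.elim0, fun i => i.elim0, ?_⟩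
      intro w hw
      rw [hbot, Submodule.mem_bot] at hw
      simp [hw]
    · obtain ⟨u, huW, hu0⟩ := Submodule.exists_mem_ne_zero_of_ne_bot hbot
      have hBuu : B u u = 0 := eq_zero_of_self_eq_neg (hskew u u)
      have hex : ∃ x ∈ W, B u x ≠ 0 := by
        by_contra h
        push_neg at h
        exact hu0 (hnd u huW h)
      obtain ⟨x, hxW, hx0⟩ := hex
      obtain ⟨v, hvW, huv⟩ : ∃ v ∈ W, B u v = 1 :=
        ⟨(B u x)⁻¹ • x, Submodule.smul_mem _ _ hxW, by
          rw [LinearMap.map_smul, smul_eq_mul, inv_mul_cancel₀ hx0]⟩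
      have hBvv : B v v = 0 := eq_zero_of_self_eq_neg (hskew v v)
      have hvu : B v u = -1 := by rw [hskew, huv]
      set W' : Submodule F V := (W ⊓ LinearMap.ker (B u)) ⊓ LinearMap.ker (B v) with hW'
      have hW'le : W' ≤ W := le_trans inf_le_left inf_le_left
      have hmemW' : ∀ w, w ∈ W' ↔ (w ∈ W ∧ B u w = 0 ∧ B v w = 0) := by
        intro w
        simp [hW', Submodule.mem_inf, LinearMap.mem_ker, and_assoc]
      have hdec : ∀ w ∈ W, w - (B u w) • v + (B v w) • u ∈ W' := by
        intro w hw
        rw [hmemW']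
        refine ⟨Submodule.add_mem _ (Submodule.sub_mem _ hw (Submodule.smul_mem _ _ hvW))
            (Submodule.smul_mem _ _ huW), ?_, ?_⟩
        · rw [map_add, map_sub, LinearMap.map_smul, LinearMap.map_smul, huv, hBuu]
          simp
        · rw [map_add, map_sub, LinearMap.map_smul, LinearMap.map_smul, hvu, hBvv]
          simp
      have huW' : u ∉ W' := by
        rw [hmemW']
        rintro ⟨-, -, h⟩
        rw [hvu] at h
        norm_num at h
      have hlt : W' < W := lt_of_le_of_ne hW'le (fun h => huW' (h ▸ huW))
      have hrank' : Module.finrank F W' ≤ k := by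
        have := Submodule.finrank_lt_finrank_of_lt hlt
        omega
      have hnd' : ∀ w ∈ W', (∀ x ∈ W', B w x = 0) → w = 0 := by
        intro w hw hall
        obtain ⟨hwW, hBuw, hBvw⟩ := (hmemW' w).mp hw
        have hwu : B w u = 0 := by rw [hskew, hBuw, neg_zero]
        have hwv : B w v = 0 := by rw [hskew, hBvw, neg_zero]
        apply hnd w (hW'le hw)
        intro y hy
        have hz := hdec y hy
        have hyz : y = (B u y) • v - (B v y) • u + (y - (B u y) • v + (B v y) • u) := by abel
        calc B w y = B w ((B u y) • v - (B v y) • u + (y - (B u y) • v + (B v y) • u)) := by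
              rw [← hyz]
          _ = (B u y) * B w v - (B v y) * B w u
                + B w (y - (B u y) • v + (B v y) • u) := by
              rw [map_add, map_sub, LinearMap.map_smul, LinearMap.map_smul]
              simp [smul_eq_mul]
          _ = 0 := by rw [hwu, hwv, hall _ hz]; ring
      obtain ⟨m, e, f, heW, hfW, hee, hff, hef, hspan⟩ := ih W' hrank' hnd'
      have heu : ∀ i, B u (e i) = 0 := fun i => ((hmemW' (e i)).mp (heW i)).2.1
      have hev : ∀ i, B v (e i) = 0 := fun i => ((hmemW' (e i)).mp (heW i)).2.2
      have hfu : ∀ i, B u (f i) = 0 := fun i => ((hmemW' (f i)).mp (hfW i)).2.1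
      have hfv : ∀ i, B v (f i) = 0 := fun i => ((hmemW' (f i)).mp (hfW i)).2.2
      refine ⟨m + 1, Fin.cons u e, Fin.cons v f, ?_, ?_, ?_, ?_, ?_, ?_⟩
      · intro i
        refine Fin.cases ?_ ?_ i
        · exact huW
        · intro j
          rw [Fin.cons_succ]
          exact hW'le (heW j)
      · intro i
        refine Fin.cases ?_ ?_ i
        · exact hvW
        · intro j
          rw [Fin.cons_succ]
          exact hW'le (hfW j)
      · intro i
        refine Fin.cases ?_ ?_ i
        · intro j
          refine Fin.cases ?_ ?_ j
          · rw [Fin.cons_zero]; exact hBuu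
          · intro j'
            rw [Fin.cons_zero, Fin.cons_succ]
            exact heu j'
        · intro i' j
          refine Fin.cases ?_ ?_ j
          · rw [Fin.cons_zero, Fin.cons_succ, hskew]
            rw [heu i', neg_zero]
          · intro j'
            rw [Fin.cons_succ, Fin.cons_succ]
            exact hee i' j'
      · intro i
        refine Fin.cases ?_ ?_ i
        · intro j
          refine Fin.cases ?_ ?_ j
          · rw [Fin.cons_zero]; exact hBvv
          · intro j'
            rw [Fin.cons_zero, Fin.cons_succ]
            exact hfv j'
        · intro i' j
          refine Fin.cases ?_ ?_ j
          · rw [Fin.cons_zero, Fin.cons_succ, hskew]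
            rw [hfv i', neg_zero]
          · intro j'
            rw [Fin.cons_succ, Fin.cons_succ]
            exact hff i' j'
      · intro i
        refine Fin.cases ?_ ?_ i
        · intro j
          refine Fin.cases ?_ ?_ j
          · rw [Fin.cons_zero, Fin.cons_zero, if_pos rfl]
            exact huv
          · intro j'
            rw [Fin.cons_zero, Fin.cons_succ, if_neg (Fin.succ_ne_zero j').symm]
            exact hfu j'
        · intro i' j
          refine Fin.cases ?_ ?_ j
          · rw [Fin.cons_zero, Fin.cons_succ, if_neg (Fin.succ_ne_zero i'), hskew]
            rw [hev i', neg_zero]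
          · intro j'
            rw [Fin.cons_succ, Fin.cons_succ, hef i' j']
            by_cases h : i' = j'
            · rw [if_pos h, if_pos (by rw [h])]
            · rw [if_neg h, if_neg (fun hc => h (Fin.succ_injective _ hc))]
      · intro w hw
        have hz := hdec w hw
        have hsub : Submodule.span F (Set.range e ∪ Set.range f) ≤
            Submodule.span F (Set.range (Fin.cons u e : Fin (m+1) → V) ∪
              Set.range (Fin.cons v f : Fin (m+1) → V)) := by
          apply Submodule.span_mono
          apply Set.union_subset_union
          · rintro - ⟨j, rfl⟩
            exact ⟨j.succ, Fin.cons_succ _ _ _⟩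
          · rintro - ⟨j, rfl⟩
            exact ⟨j.succ, Fin.cons_succ _ _ _⟩
        have humem : u ∈ Submodule.span F (Set.range (Fin.cons u e : Fin (m+1) → V) ∪
            Set.range (Fin.cons v f : Fin (m+1) → V)) :=
          Submodule.subset_span (Or.inl ⟨0, Fin.cons_zero _ _⟩)
        have hvmem : v ∈ Submodule.span F (Set.range (Fin.cons u e : Fin (m+1) → V) ∪
            Set.range (Fin.cons v f : Fin (m+1) → V)) :=
          Submodule.subset_span (Or.inr ⟨0, Fin.cons_zero _ _⟩)
        have hyz : w = (B u w) • v - (B v w) • u + (w - (B u w) • v + (B v w) • u) := by abel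
        rw [hyz]
        exact Submodule.add_mem _
          (Submodule.sub_mem _ (Submodule.smul_mem _ _ hvmem) (Submodule.smul_mem _ _ humem))
          (hsub (hspan _ hz))
end GS

section LI
variable {F V : Type*} [Field F] [AddCommGroup V] [Module F V]
variable (B : V →ₗ[F] V →ₗ[F] F)

theorem li_pairing {ι' : Type*} [Fintype ι'] [DecidableEq ι'] (u v : ι' → V)
    (huu : ∀ i j, B (u i) (u j) = 0) (hvv : ∀ i j, B (v i) (v j) = 0)
    (huv : ∀ i j, B (u i) (v j) = if i = j then 1 else 0) :
    LinearIndependent F (Sum.elim u v) := by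
  rw [Fintype.linearIndependent_iff]
  intro c hc
  have hL : ∀ j, c (Sum.inl j) = 0 := by
    intro j
    have h0 : B (∑ s, c s • Sum.elim u v s) (v j) = 0 := by rw [hc]; simp
    rw [map_sum] at h0
    simp only [LinearMap.sum_apply, LinearMap.map_smul, LinearMap.smul_apply,
      smul_eq_mul] at h0
    rw [Fintype.sum_sum_type] at h0
    simp only [Sum.elim_inl, Sum.elim_inr, huv, hvv, mul_ite, mul_one, mul_zero,
      Finset.sum_ite_eq', Finset.mem_univ, if_true, Finset.sum_const_zero, add_zero] at h0
    exact h0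
  have hR : ∀ j, c (Sum.inr j) = 0 := by
    intro j
    have h0 : B (u j) (∑ s, c s • Sum.elim u v s) = 0 := by rw [hc]; simp
    rw [map_sum] at h0
    simp only [LinearMap.map_smul, smul_eq_mul] at h0
    rw [Fintype.sum_sum_type] at h0
    simp only [Sum.elim_inl, Sum.elim_inr, huv, huu, mul_ite, mul_one, mul_zero,
      Finset.sum_ite_eq, Finset.sum_ite_eq', Finset.mem_univ, if_true,
      Finset.sum_const_zero, zero_add] at h0
    exact h0
  intro s
  cases s with
  | inl j => exact hL j
  | inr j => exact hR j
end LI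

set_option linter.unusedSectionVars false

section BF
variable {F : Type*} [Field F] [CharZero F] {n : ℕ}

/-- The standard symplectic bilinear form on `(Fin n ⊕ Fin n) → F`. -/
def Bf (F : Type*) [Field F] (n : ℕ) :
    ((Fin n ⊕ Fin n) → F) →ₗ[F] ((Fin n ⊕ Fin n) → F) →ₗ[F] F :=
  LinearMap.mk₂ F (fun x y => x ⬝ᵥ (Matrix.J (Fin n) F *ᵥ y))
    (fun x x' y => by rw [add_dotProduct])
    (fun c x y => by rw [smul_dotProduct])
    (fun x y y' => by rw [mulVec_add, dotProduct_add])
    (fun c x y => by rw [mulVec_smul, dotProduct_smul])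

theorem Bf_apply (x y : (Fin n ⊕ Fin n) → F) :
    Bf F n x y = x ⬝ᵥ (Matrix.J (Fin n) F *ᵥ y) := rfl

theorem Bf_skew (x y : (Fin n ⊕ Fin n) → F) : Bf F n x y = - Bf F n y x := by
  rw [Bf_apply, Bf_apply, dotProduct_mulVec, dotProduct_mulVec]
  have hJ : Matrix.J (Fin n) F = -(Matrix.J (Fin n) F)ᵀ := by
    rw [Matrix.J_transpose, neg_neg]
  rw [hJ]
  rw [Matrix.vecMul_neg, Matrix.vecMul_transpose, neg_dotProduct, dotProduct_comm,
    dotProduct_mulVec]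
  simp

theorem Bf_nondeg (w : (Fin n ⊕ Fin n) → F) (h : ∀ y, Bf F n w y = 0) : w = 0 := by
  have h1 : w ᵥ* Matrix.J (Fin n) F = 0 := by
    funext j
    have := h (Pi.single j 1)
    rw [Bf_apply, dotProduct_mulVec] at this
    simpa using this
  have h2 : w ᵥ* (Matrix.J (Fin n) F * Matrix.J (Fin n) F) = 0 := by
    rw [← Matrix.vecMul_vecMul, h1, Matrix.zero_vecMul]
  rw [Matrix.J_squared] at h2
  have h3 : w ᵥ* (-1 : Matrix (Fin n ⊕ Fin n) (Fin n ⊕ Fin n) F) = -w := by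
    rw [Matrix.vecMul_neg, Matrix.vecMul_one]
  rw [h3] at h2
  simpa using h2
end BF

/-- The standard symplectic involution with `p` positive eigenvalue pairs. -/
def stdInv (F : Type*) [Field F] (n p : ℕ) :
    Matrix (Fin n ⊕ Fin n) (Fin n ⊕ Fin n) F :=
  Matrix.diagonal (Sum.elim (fun a : Fin n => if (a : ℕ) < p then (1 : F) else -1)
    (fun a : Fin n => if (a : ℕ) < p then (1 : F) else -1))

theorem card_filter_lt (n p : ℕ) (h : p ≤ n) :
    (Finset.univ.filter (fun a : Fin n => (a : ℕ) < p)).card = p := by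
  have : (Finset.univ.filter (fun a : Fin n => (a : ℕ) < p)) =
      Finset.map (Fin.castLEEmb h) Finset.univ := by
    ext a
    simp only [Finset.mem_filter, Finset.mem_univ, true_and, Finset.mem_map,
      Fin.castLEEmb, Function.Embedding.coeFn_mk]
    constructor
    · intro ha
      exact ⟨⟨(a : ℕ), ha⟩, by simp [Fin.ext_iff]⟩
    · rintro ⟨b, rfl⟩
      simpa using b.isLt
  rw [this, Finset.card_map, Finset.card_univ, Fintype.card_fin]

theorem trace_stdInv {F : Type*} [Field F] (n p : ℕ) (h : p ≤ n) :
    (stdInv F n p).trace = 2 * ((p : F) - ((n - p : ℕ) : F)) := by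
  rw [stdInv, Matrix.trace_diagonal]
  rw [Fintype.sum_sum_type]
  simp only [Sum.elim_inl, Sum.elim_inr]
  have hsum : ∑ a : Fin n, (if (a : ℕ) < p then (1 : F) else -1)
      = (p : F) - ((n - p : ℕ) : F) := by
    rw [Finset.sum_ite (f := fun _ => (1:F)) (g := fun _ => (-1:F))]
    rw [Finset.sum_const, Finset.sum_const, Finset.filter_not, card_filter_lt n p h]
    rw [Finset.card_sdiff_of_subset (Finset.filter_subset _ _), Finset.card_univ, Fintype.card_fin,
      card_filter_lt n p h]
    simp only [nsmul_eq_mul, mul_one, mul_neg]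
    ring
  rw [hsum]
  ring

theorem conjTranspose_mul_entry {F : Type*} [Field F] {n : ℕ}
    (M P : Matrix (Fin n ⊕ Fin n) (Fin n ⊕ Fin n) F) (i j : Fin n ⊕ Fin n) :
    (Pᵀ * M * P) i j = (fun s => P s i) ⬝ᵥ (M *ᵥ fun t => P t j) := by
  simp only [Matrix.mul_apply, Matrix.transpose_apply, dotProduct, Matrix.mulVec,
    dotProduct]
  simp only [Finset.sum_mul, Finset.mul_sum]
  rw [Finset.sum_comm]
  refine Finset.sum_congr rfl fun s _ => Finset.sum_congr rfl fun t _ => by ring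

theorem key_lemma {F : Type*} [Field F] [CharZero F] {n : ℕ}
    (g : Matrix (Fin n ⊕ Fin n) (Fin n ⊕ Fin n) F)
    (hg : g ∈ Matrix.symplecticGroup (Fin n) F) (hg2 : g ^ 2 = 1) :
    ∃ p ≤ n, ∃ P ∈ Matrix.symplecticGroup (Fin n) F, g = P * stdInv F n p * P⁻¹ := by
  classical
  have hg' : gᵀ * Matrix.J (Fin n) F * g = Matrix.J (Fin n) F :=
    SymplecticGroup.mem_iff'.mp hg
  have hgg : ∀ x, g *ᵥ (g *ᵥ x) = x := by
    intro x
    rw [Matrix.mulVec_mulVec, ← sq, hg2, Matrix.one_mulVec]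
  have hinv : ∀ x y, Bf F n (g *ᵥ x) (g *ᵥ y) = Bf F n x y := by
    intro x y
    rw [Bf_apply, Bf_apply, Matrix.mulVec_mulVec, dotProduct_mulVec, dotProduct_mulVec,
      ← Matrix.vecMul_transpose, Matrix.vecMul_vecMul, ← Matrix.mul_assoc, hg']
  set V := (Fin n ⊕ Fin n) → F with hV
  set Wp : Submodule F V := LinearMap.ker (Matrix.mulVecLin (g - 1)) with hWp
  set Wm : Submodule F V := LinearMap.ker (Matrix.mulVecLin (g + 1)) with hWm
  have mem_Wp : ∀ x : V, x ∈ Wp ↔ g *ᵥ x = x := by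
    intro x
    rw [hWp, LinearMap.mem_ker, Matrix.mulVecLin_apply, Matrix.sub_mulVec,
      Matrix.one_mulVec, sub_eq_zero]
  have mem_Wm : ∀ x : V, x ∈ Wm ↔ g *ᵥ x = -x := by
    intro x
    rw [hWm, LinearMap.mem_ker, Matrix.mulVecLin_apply, Matrix.add_mulVec,
      Matrix.one_mulVec, add_eq_zero_iff_eq_neg]
  have hdecp : ∀ x : V, (2 : F)⁻¹ • (x + g *ᵥ x) ∈ Wp := by
    intro x
    rw [mem_Wp, Matrix.mulVec_smul, Matrix.mulVec_add, hgg]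
    rw [add_comm]
  have hdecm : ∀ x : V, (2 : F)⁻¹ • (x - g *ᵥ x) ∈ Wm := by
    intro x
    rw [mem_Wm, Matrix.mulVec_smul, Matrix.mulVec_sub, hgg, ← smul_neg, neg_sub]
  have hdecsum : ∀ x : V, (2 : F)⁻¹ • (x + g *ᵥ x) + (2 : F)⁻¹ • (x - g *ᵥ x) = x := by
    intro x
    rw [← smul_add]
    have h2 : (x + g *ᵥ x) + (x - g *ᵥ x) = (2 : F) • x := by
      rw [two_smul]; abel
    rw [h2, smul_smul, inv_mul_cancel₀ (two_ne_zero), one_smul]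
  have horth : ∀ xp ∈ Wp, ∀ xm ∈ Wm, Bf F n xp xm = 0 := by
    intro xp hxp xm hxm
    apply eq_zero_of_self_eq_neg
    conv_lhs => rw [← hinv xp xm, (mem_Wp xp).mp hxp, (mem_Wm xm).mp hxm, map_neg]
  have hndp : ∀ w ∈ Wp, (∀ x ∈ Wp, Bf F n w x = 0) → w = 0 := by
    intro w hw hall
    apply Bf_nondeg
    intro y
    rw [← hdecsum y, map_add]
    rw [hall _ (hdecp y), horth w hw _ (hdecm y), add_zero]
  have hndm : ∀ w ∈ Wm, (∀ x ∈ Wm, Bf F n w x = 0) → w = 0 := by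
    intro w hw hall
    apply Bf_nondeg
    intro y
    rw [← hdecsum y, map_add]
    have h1 : Bf F n w ((2 : F)⁻¹ • (y + g *ᵥ y)) = 0 := by
      rw [Bf_skew, horth _ (hdecp y) w hw, neg_zero]
    rw [h1, hall _ (hdecm y), add_zero]
  obtain ⟨mp, ep, fp, hepW, hfpW, heep, hffp, hefp, hspanp⟩ :=
    exists_symp (Bf F n) Bf_skew (Module.finrank F Wp) Wp le_rfl hndp
  obtain ⟨mm, em, fm, hemW, hfmW, heem, hffm, hefm, hspanm⟩ :=
    exists_symp (Bf F n) Bf_skew (Module.finrank F Wm) Wm le_rfl hndm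
  set E : Fin mp ⊕ Fin mm → V := Sum.elim ep em with hE
  set Fv : Fin mp ⊕ Fin mm → V := Sum.elim fp fm with hFv
  have hEE : ∀ i j, Bf F n (E i) (E j) = 0 := by
    rintro (i | i) (j | j)
    · exact heep i j
    · exact horth _ (hepW i) _ (hemW j)
    · rw [hE, Sum.elim_inr, Sum.elim_inl, Bf_skew, horth _ (hepW j) _ (hemW i), neg_zero]
    · exact heem i j
  have hFF : ∀ i j, Bf F n (Fv i) (Fv j) = 0 := by
    rintro (i | i) (j | j)
    · exact hffp i j
    · exact horth _ (hfpW i) _ (hfmW j)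
    · rw [hFv, Sum.elim_inr, Sum.elim_inl, Bf_skew, horth _ (hfpW j) _ (hfmW i), neg_zero]
    · exact hffm i j
  have hEF : ∀ i j, Bf F n (E i) (Fv j) = if i = j then 1 else 0 := by
    rintro (i | i) (j | j)
    · rw [hE, hFv, Sum.elim_inl, Sum.elim_inl, hefp i j]
      simp [Sum.inl.injEq]
    · rw [hE, hFv, Sum.elim_inl, Sum.elim_inr, horth _ (hepW i) _ (hfmW j)]
      simp
    · rw [hE, hFv, Sum.elim_inr, Sum.elim_inl, Bf_skew, horth _ (hfpW j) _ (hemW i), neg_zero]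
      simp
    · rw [hE, hFv, Sum.elim_inr, Sum.elim_inr, hefm i j]
      simp [Sum.inr.injEq]
  have hLI : LinearIndependent F (Sum.elim E Fv) := li_pairing (Bf F n) E Fv hEE hFF hEF
  have hTop : ⊤ ≤ Submodule.span F (Set.range (Sum.elim E Fv)) := by
    rw [Set.Sum.elim_range]
    intro x _
    have hx : x = (2 : F)⁻¹ • (x + g *ᵥ x) + (2 : F)⁻¹ • (x - g *ᵥ x) := (hdecsum x).symm
    have hsub1 : Submodule.span F (Set.range ep ∪ Set.range fp) ≤
        Submodule.span F (Set.range E ∪ Set.range Fv) := by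
      apply Submodule.span_mono
      apply Set.union_subset_union
      · rintro - ⟨i, rfl⟩; exact ⟨Sum.inl i, rfl⟩
      · rintro - ⟨i, rfl⟩; exact ⟨Sum.inl i, rfl⟩
    have hsub2 : Submodule.span F (Set.range em ∪ Set.range fm) ≤
        Submodule.span F (Set.range E ∪ Set.range Fv) := by
      apply Submodule.span_mono
      apply Set.union_subset_union
      · rintro - ⟨i, rfl⟩; exact ⟨Sum.inr i, rfl⟩
      · rintro - ⟨i, rfl⟩; exact ⟨Sum.inr i, rfl⟩
    rw [hx]
    exact Submodule.add_mem _ (hsub1 (hspanp _ (hdecp x))) (hsub2 (hspanm _ (hdecm x)))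
  have hk : mp + mm = n := by
    have hcard := Module.finrank_eq_card_basis (Module.Basis.mk hLI hTop)
    rw [Module.finrank_pi] at hcard
    simp only [Fintype.card_sum, Fintype.card_fin] at hcard
    omega
  set σ : Fin n ≃ Fin mp ⊕ Fin mm := (finCongr hk.symm).trans finSumFinEquiv.symm
    with hσ
  have hval : ∀ s : Fin mp ⊕ Fin mm, ((σ.symm s : Fin n) : ℕ) =
      Sum.elim (fun a' : Fin mp => (a' : ℕ)) (fun a' : Fin mm => mp + (a' : ℕ)) s := by
    rintro (a' | a') <;>
      simp [hσ, Equiv.symm_trans_apply]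
  have hlt : ∀ (a : Fin n) (a' : Fin mp), σ a = Sum.inl a' → (a : ℕ) < mp := by
    intro a a' h
    have h2 : σ.symm (σ a) = σ.symm (Sum.inl a') := by rw [h]
    rw [Equiv.symm_apply_apply] at h2
    have := hval (Sum.inl a')
    rw [← h2] at this
    simp only [Sum.elim_inl] at this
    rw [this]
    exact a'.isLt
  have hge : ∀ (a : Fin n) (a' : Fin mm), σ a = Sum.inr a' → ¬ ((a : ℕ) < mp) := by
    intro a a' h
    have h2 : σ.symm (σ a) = σ.symm (Sum.inr a') := by rw [h]
    rw [Equiv.symm_apply_apply] at h2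
    have := hval (Sum.inr a')
    rw [← h2] at this
    simp only [Sum.elim_inr] at this
    omega
  set col : (Fin n ⊕ Fin n) → V := Sum.elim (fun a => Fv (σ a)) (fun a => E (σ a))
    with hcol
  set P : Matrix (Fin n ⊕ Fin n) (Fin n ⊕ Fin n) F := Matrix.of fun i j => col j i with hPdef
  have hBcol : ∀ j j', Bf F n (col j) (col j') = Matrix.J (Fin n) F j j' := by
    rintro (a | a) (b | b)
    · rw [hcol, Sum.elim_inl, Sum.elim_inl, hFF]
      simp [Matrix.J]
    · rw [hcol, Sum.elim_inl, Sum.elim_inr, Bf_skew, hEF]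
      simp only [EmbeddingLike.apply_eq_iff_eq]
      by_cases hab : a = b <;>
        simp [Matrix.J, hab, Matrix.fromBlocks_apply₁₂, Matrix.neg_apply, Matrix.one_apply,
          eq_comm]
    · rw [hcol, Sum.elim_inr, Sum.elim_inl, hEF]
      simp only [EmbeddingLike.apply_eq_iff_eq]
      by_cases hab : a = b <;>
        simp [Matrix.J, hab, Matrix.fromBlocks_apply₂₁, Matrix.one_apply]
    · rw [hcol, Sum.elim_inr, Sum.elim_inr, hEE]
      simp [Matrix.J]
  have hP : P ∈ Matrix.symplecticGroup (Fin n) F := by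
    rw [SymplecticGroup.mem_iff']
    ext i j
    rw [conjTranspose_mul_entry]
    exact hBcol i j
  have hdet : IsUnit P.det := SymplecticGroup.symplectic_det hP
  have heig : ∀ j, g *ᵥ col j =
      Sum.elim (fun a : Fin n => if (a : ℕ) < mp then (1 : F) else -1)
        (fun a : Fin n => if (a : ℕ) < mp then (1 : F) else -1) j • col j := by
    rintro (a | a)
    · rw [hcol, Sum.elim_inl, Sum.elim_inl]
      rcases hσa : σ a with a' | a'
      · rw [hFv, Sum.elim_inl, if_pos (hlt a a' hσa), one_smul]
        exact (mem_Wp _).mp (hfpW a')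
      · rw [hFv, Sum.elim_inr, if_neg (hge a a' hσa)]
        rw [(mem_Wm _).mp (hfmW a'), neg_one_smul]
    · rw [hcol, Sum.elim_inr, Sum.elim_inr]
      rcases hσa : σ a with a' | a'
      · rw [hE, Sum.elim_inl, if_pos (hlt a a' hσa), one_smul]
        exact (mem_Wp _).mp (hepW a')
      · rw [hE, Sum.elim_inr, if_neg (hge a a' hσa)]
        rw [(mem_Wm _).mp (hemW a'), neg_one_smul]
  have hgP : g * P = P * stdInv F n mp := by
    ext i j
    have h1 : (g * P) i j = (g *ᵥ col j) i := by
      rw [Matrix.mul_apply]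
      rfl
    rw [h1, heig j, stdInv, Matrix.mul_diagonal, Pi.smul_apply, smul_eq_mul]
    rw [mul_comm]
    rfl
  refine ⟨mp, by omega, P, hP, ?_⟩
  calc g = g * (P * P⁻¹) := by rw [Matrix.mul_nonsing_inv P hdet, Matrix.mul_one]
    _ = (g * P) * P⁻¹ := by rw [Matrix.mul_assoc]
    _ = P * stdInv F n mp * P⁻¹ := by rw [hgP]

/-- Over a field of characteristic zero, two involutions of `Sp_{2n}(F)` are conjugate
by an element of `Sp_{2n}(F)` if and only if they have the same trace. -/
theorem involutions_Sp_conjugate_iff_trace_eq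
    (F : Type*) [Field F] [CharZero F] (n : ℕ)
    (g₁ g₂ : Matrix (Fin n ⊕ Fin n) (Fin n ⊕ Fin n) F)
    (hg₁ : g₁ ∈ Matrix.symplecticGroup (Fin n) F)
    (hg₂ : g₂ ∈ Matrix.symplecticGroup (Fin n) F)
    (h₁ : g₁ ^ 2 = 1) (h₂ : g₂ ^ 2 = 1) :
    (∃ s ∈ Matrix.symplecticGroup (Fin n) F, s * g₁ * s⁻¹ = g₂) ↔
      g₁.trace = g₂.trace := by
  constructor
  · rintro ⟨s, hs, rfl⟩
    have hdet : IsUnit s.det := SymplecticGroup.symplectic_det hs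
    rw [Matrix.trace_mul_cycle, Matrix.nonsing_inv_mul s hdet, Matrix.one_mul]
  · intro htr
    obtain ⟨p₁, hp₁, P₁, hP₁, hg₁e⟩ := key_lemma g₁ hg₁ h₁
    obtain ⟨p₂, hp₂, P₂, hP₂, hg₂e⟩ := key_lemma g₂ hg₂ h₂
    have hd₁ : IsUnit P₁.det := SymplecticGroup.symplectic_det hP₁
    have hd₂ : IsUnit P₂.det := SymplecticGroup.symplectic_det hP₂
    have ht₁ : g₁.trace = 2 * ((p₁ : F) - ((n - p₁ : ℕ) : F)) := by
      rw [hg₁e, Matrix.trace_mul_cycle, Matrix.nonsing_inv_mul _ hd₁,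
        Matrix.one_mul, trace_stdInv n p₁ hp₁]
    have ht₂ : g₂.trace = 2 * ((p₂ : F) - ((n - p₂ : ℕ) : F)) := by
      rw [hg₂e, Matrix.trace_mul_cycle, Matrix.nonsing_inv_mul _ hd₂,
        Matrix.one_mul, trace_stdInv n p₂ hp₂]
    have hpe : p₁ = p₂ := by
      have he : 2 * ((p₁ : F) - ((n - p₁ : ℕ) : F)) = 2 * ((p₂ : F) - ((n - p₂ : ℕ) : F)) := by
        rw [← ht₁, ← ht₂, htr]
      rw [Nat.cast_sub hp₁, Nat.cast_sub hp₂] at he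
      have : (p₁ : F) = (p₂ : F) := by linear_combination he / 4
      exact_mod_cast this
    subst hpe
    have hinv₁ : P₁⁻¹ ∈ Matrix.symplecticGroup (Fin n) F := by
      rw [SymplecticGroup.inv_eq_symplectic_inv _ hP₁]
      exact mul_mem (mul_mem (SymplecticGroup.neg_mem (SymplecticGroup.J_mem _ _))
        (SymplecticGroup.transpose_mem hP₁)) (SymplecticGroup.J_mem _ _)
    refine ⟨P₂ * P₁⁻¹, mul_mem hP₂ hinv₁, ?_⟩
    have h11 : P₁⁻¹ * P₁ = 1 := Matrix.nonsing_inv_mul _ hd₁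
    have hsinv : (P₂ * P₁⁻¹)⁻¹ = P₁ * P₂⁻¹ := by
      rw [Matrix.mul_inv_rev, Matrix.nonsing_inv_nonsing_inv _ hd₁]
    rw [hg₁e, hsinv, hg₂e]
    calc P₂ * P₁⁻¹ * (P₁ * stdInv F n p₁ * P₁⁻¹) * (P₁ * P₂⁻¹)
        = P₂ * ((P₁⁻¹ * P₁) * (stdInv F n p₁ * ((P₁⁻¹ * P₁) * P₂⁻¹))) := by
          simp only [Matrix.mul_assoc]
      _ = P₂ * stdInv F n p₁ * P₂⁻¹ := by
          rw [h11, Matrix.one_mul, Matrix.one_mul, ← Matrix.mul_assoc]
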